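/- For all natural numbers x ≠ y and every real s, the incomplete Gaussian inner product of Hermite polynomials has the closed form: (x − y) · ∫_s^∞ e^{−t²/2}·He_x(t)·He_y(t) dt = e^{−s²/2} · ( x·He_{x−1}(s)·He_y(s) − y·He_x(s)·He_{y−1}(s) ), where the terms with index −1 are interpreted as 0. Consequently, for x ≠ y the discrete Hermite kernel equals K_s(x,y) = (2π·x!·y!)^{−1/2}·e^{−s²/2}·( x·He_{x−1}(s)·He_y(s) − y·He_x(s)·He_{y−1}(s) )/(x − y). -/

import Mathlib

open scoped Nat
open Polynomial MeasureTheory Filter Topology Set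

noncomputable section


/-- The discrete Hermite kernel with parameter `s ∈ ℝ`:
`K_s(x,y) = (2π·x!·y!)^{−1/2} ∫_s^∞ e^{−t²/2}·He_x(t)·He_y(t) dt` for `x, y ∈ ℕ`,
where `He_n` is the probabilists' Hermite polynomial. -/
def discreteHermiteKernel (s : ℝ) (x y : ℕ) : ℝ :=
  (Real.sqrt (2 * Real.pi * (x ! : ℝ) * (y ! : ℝ)))⁻¹ *
    ∫ t in Set.Ioi s, Real.exp (-t ^ 2 / 2) * Polynomial.aeval t (Polynomial.hermite x) *
      Polynomial.aeval t (Polynomial.hermite y)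

lemma hermite_derivative (n : ℕ) :
    derivative (hermite (n + 1)) = ((n : ℤ[X]) + 1) * hermite n := by
  induction n with
  | zero => simp [hermite_one, hermite_zero]
  | succ n ih =>
    have hd : derivative (hermite n) = X * hermite n - hermite (n + 1) := by
      rw [hermite_succ]; ring
    rw [hermite_succ (n + 1), derivative_sub, derivative_mul, derivative_X, ih,
      derivative_mul, hd]
    simp only [derivative_add, derivative_natCast, derivative_one]
    push_cast
    ring

lemma hermite_ode (n : ℕ) :
    derivative (derivative (hermite n)) =
      X * derivative (hermite n) - (n : ℤ[X]) * hermite n := by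
  cases n with
  | zero => simp [hermite_zero]
  | succ n =>
    rw [hermite_derivative, derivative_mul]
    simp only [derivative_add, derivative_natCast, derivative_one]
    rw [hermite_succ]
    have hd : derivative (hermite n) = X * hermite n - hermite (n + 1) := by
      rw [hermite_succ]; ring
    rw [hd, hermite_succ]
    push_cast
    ring

lemma aeval_derivative_hermite (t : ℝ) (n : ℕ) :
    aeval t (derivative (hermite n)) = (n : ℝ) * aeval t (hermite (n - 1)) := by
  cases n with
  | zero => simp [hermite_zero]
  | succ n =>
    rw [hermite_derivative]
    simp only [map_mul, map_add, map_natCast, map_one, Nat.succ_sub_one]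
    push_cast
    ring

lemma integrableOn_pow_gauss (n : ℕ) (s : ℝ) :
    IntegrableOn (fun t : ℝ => t ^ n * Real.exp (-t ^ 2 / 2)) (Set.Ioi s) := by
  have hb : (0 : ℝ) < 1 / 2 := by norm_num
  have h0 : IntegrableOn (fun t : ℝ => t ^ (n : ℝ) * Real.exp (-(1 / 2) * t ^ 2))
      (Set.Ioi 0) :=
    integrableOn_rpow_mul_exp_neg_mul_sq hb
      (lt_of_lt_of_le neg_one_lt_zero (Nat.cast_nonneg n))
  have h1 : IntegrableOn (fun t : ℝ => t ^ n * Real.exp (-t ^ 2 / 2))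
      (Set.Ioi (max s 1)) := by
    refine ((h0.mono_set (Set.Ioi_subset_Ioi ?_)).congr_fun ?_ measurableSet_Ioi)
    · exact le_trans zero_le_one (le_max_right s 1)
    · intro t _
      simp only [Real.rpow_natCast]
      congr 1
      ring
  have h2 : IntegrableOn (fun t : ℝ => t ^ n * Real.exp (-t ^ 2 / 2))
      (Set.Ioc s (max s 1)) := by
    apply Continuous.integrableOn_Ioc
    exact (continuous_pow n).mul (Real.continuous_exp.comp (by continuity))
  have h3 := h2.union h1
  rwa [Set.Ioc_union_Ioi_eq_Ioi (le_max_left s 1)] at h3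

lemma integrableOn_poly_gauss (P : ℝ[X]) (s : ℝ) :
    IntegrableOn (fun t : ℝ => P.eval t * Real.exp (-t ^ 2 / 2)) (Set.Ioi s) := by
  induction P using Polynomial.induction_on' with
  | monomial n c =>
    simpa [eval_monomial, mul_assoc] using (show IntegrableOn (fun t : ℝ => c * (t ^ n * Real.exp (-t ^ 2 / 2))) (Set.Ioi s) volume
      from (integrableOn_pow_gauss n s).const_mul c)
  | add p q hp hq => simpa [add_mul] using (show IntegrableOn (fun t : ℝ => eval t p * Real.exp (-t ^ 2 / 2) +
    eval t q * Real.exp (-t ^ 2 / 2)) (Set.Ioi s) from hp.add hq)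

lemma tendsto_poly_gauss (P : ℝ[X]) :
    Tendsto (fun t : ℝ => P.eval t * Real.exp (-t ^ 2 / 2)) atTop (𝓝 0) := by
  have h1 := P.tendsto_div_exp_atTop
  have h2 : Tendsto (fun t : ℝ => Real.exp (t - t ^ 2 / 2)) atTop (𝓝 0) := by
    apply Real.tendsto_exp_atBot.comp
    apply tendsto_atBot_mono' atTop (f₁ := fun t : ℝ => 2 - t)
    · filter_upwards with t
      nlinarith [sq_nonneg (t - 2)]
    · apply Filter.tendsto_atBot_add_const_left
      exact tendsto_neg_atTop_atBot
  have key : ∀ t : ℝ, P.eval t * Real.exp (-t ^ 2 / 2) =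
      (P.eval t / Real.exp t) * Real.exp (t - t ^ 2 / 2) := by
    intro t
    rw [div_mul_eq_mul_div, mul_div_assoc, ← Real.exp_sub]
    congr 2
    ring
  simp only [key]
  simpa using h1.mul h2

theorem cd_aux
    (x y : ℕ) (hxy : x ≠ y) (s : ℝ) :
    ((x : ℝ) - (y : ℝ)) *
        ∫ t in Set.Ioi s, Real.exp (-t ^ 2 / 2) * Polynomial.aeval t (Polynomial.hermite x) *
            Polynomial.aeval t (Polynomial.hermite y)
      = Real.exp (-s ^ 2 / 2) *
          ((x : ℝ) * Polynomial.aeval s (Polynomial.hermite (x - 1)) *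
              Polynomial.aeval s (Polynomial.hermite y)
            - (y : ℝ) * Polynomial.aeval s (Polynomial.hermite x) *
                Polynomial.aeval s (Polynomial.hermite (y - 1))) := by
  set p := hermite x with hp
  set q := hermite y with hq
  set F : ℝ → ℝ := fun t => Real.exp (-t ^ 2 / 2) *
    (aeval t (derivative p) * aeval t q - aeval t p * aeval t (derivative q)) with hF
  set G : ℝ → ℝ := fun t =>
    ((y : ℝ) - (x : ℝ)) * (Real.exp (-t ^ 2 / 2) * aeval t p * aeval t q) with hG
  have hR : ∀ (r : ℤ[X]) (t : ℝ), (r.map (Int.castRingHom ℝ)).eval t = aeval t r := by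
    intro r t
    rw [aeval_def, eval₂_eq_eval_map, algebraMap_int_eq]
  have hexp : ∀ t : ℝ, HasDerivAt (fun u : ℝ => Real.exp (-u ^ 2 / 2))
      (-t * Real.exp (-t ^ 2 / 2)) t := by
    intro t
    have h : HasDerivAt (fun u : ℝ => -u ^ 2 / 2) (-t) t := by
      have := ((hasDerivAt_pow 2 t).neg.div_const 2)
      exact this.congr_deriv (by norm_num; ring)
    simpa [mul_comm] using h.exp
  have hderiv : ∀ t : ℝ, HasDerivAt F (G t) t := by
    intro t
    have h := ((hexp t).mul
      (((p.derivative.hasDerivAt_aeval t).mul (q.hasDerivAt_aeval t)).sub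
        ((p.hasDerivAt_aeval t).mul (q.derivative.hasDerivAt_aeval t))))
    refine h.congr_deriv ?_
    have hox : aeval t (derivative (derivative p)) =
        t * aeval t (derivative p) - (x : ℝ) * aeval t p := by
      have := congrArg (aeval t) (hermite_ode x)
      simpa [map_sub, map_mul] using this
    have hoy : aeval t (derivative (derivative q)) =
        t * aeval t (derivative q) - (y : ℝ) * aeval t q := by
      have := congrArg (aeval t) (hermite_ode y)
      simpa [map_sub, map_mul] using this
    rw [hG]
    simp only [hox, hoy, Pi.mul_apply, Pi.sub_apply]
    ring
  have hint : IntegrableOn G (Set.Ioi s) := by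
    have h := (integrableOn_poly_gauss ((p * q).map (Int.castRingHom ℝ)) s).const_mul
      ((y : ℝ) - (x : ℝ))
    refine MeasureTheory.IntegrableOn.congr_fun h (fun t _ => ?_) measurableSet_Ioi
    simp only [eval_map, hR, map_mul, hG]
    ring
  have htend : Tendsto F atTop (𝓝 0) := by
    have h := tendsto_poly_gauss
      ((derivative p * q - p * derivative q).map (Int.castRingHom ℝ))
    apply h.congr
    intro t
    simp only [hR, map_sub, map_mul, hF]
    ring
  have hcont : ContinuousWithinAt F (Set.Ici s) s := by
    apply Continuous.continuousWithinAt
    exact (Real.continuous_exp.comp (by continuity)).mul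
      (((p.derivative.continuous_aeval).mul q.continuous_aeval).sub
        ((p.continuous_aeval).mul q.derivative.continuous_aeval))
  have hFTC := integral_Ioi_of_hasDerivAt_of_tendsto hcont
    (fun t _ => hderiv t) hint htend
  simp only [hG, integral_const_mul] at hFTC
  have hFs : F s = Real.exp (-s ^ 2 / 2) *
      ((x : ℝ) * aeval s (hermite (x - 1)) * aeval s q
        - (y : ℝ) * aeval s p * aeval s (hermite (y - 1))) := by
    rw [hF]
    simp only [hp, hq, aeval_derivative_hermite]
    ring
  have : ((x : ℝ) - (y : ℝ)) * ∫ t in Set.Ioi s,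
      Real.exp (-t ^ 2 / 2) * aeval t p * aeval t q = F s := by linarith
  rw [this, hFs]

/-- For `x ≠ y` and any real `s`:
`(x − y)·∫_s^∞ e^{−t²/2}·He_x(t)·He_y(t) dt
  = e^{−s²/2}·( x·He_{x−1}(s)·He_y(s) − y·He_x(s)·He_{y−1}(s) )`
(the terms with index `−1` being interpreted as `0`, which here is automatic since their
coefficients `x`, resp. `y`, vanish), and consequently the discrete Hermite kernel equals
`K_s(x,y) = (2π·x!·y!)^{−1/2}·e^{−s²/2}·( x·He_{x−1}(s)·He_y(s) − y·He_x(s)·He_{y−1}(s) )/(x−y)`. -/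
theorem discreteHermiteKernel_christoffelDarboux_lower
    (x y : ℕ) (hxy : x ≠ y) (s : ℝ) :
    ((x : ℝ) - (y : ℝ)) *
        ∫ t in Set.Ioi s, Real.exp (-t ^ 2 / 2) * Polynomial.aeval t (Polynomial.hermite x) *
            Polynomial.aeval t (Polynomial.hermite y)
      = Real.exp (-s ^ 2 / 2) *
          ((x : ℝ) * Polynomial.aeval s (Polynomial.hermite (x - 1)) *
              Polynomial.aeval s (Polynomial.hermite y)
            - (y : ℝ) * Polynomial.aeval s (Polynomial.hermite x) *
                Polynomial.aeval s (Polynomial.hermite (y - 1)))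
    ∧ discreteHermiteKernel s x y
      = (Real.sqrt (2 * Real.pi * (x ! : ℝ) * (y ! : ℝ)))⁻¹ * Real.exp (-s ^ 2 / 2) *
          ((x : ℝ) * Polynomial.aeval s (Polynomial.hermite (x - 1)) *
              Polynomial.aeval s (Polynomial.hermite y)
            - (y : ℝ) * Polynomial.aeval s (Polynomial.hermite x) *
                Polynomial.aeval s (Polynomial.hermite (y - 1)))
          / ((x : ℝ) - (y : ℝ)) := by
  have h1 := cd_aux x y hxy s
  refine ⟨h1, ?_⟩
  have hne : (x : ℝ) - (y : ℝ) ≠ 0 := by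
    rw [sub_ne_zero]
    exact_mod_cast hxy
  have hInt : (∫ t in Set.Ioi s, Real.exp (-t ^ 2 / 2) *
        Polynomial.aeval t (Polynomial.hermite x) * Polynomial.aeval t (Polynomial.hermite y))
      = (Real.exp (-s ^ 2 / 2) *
          ((x : ℝ) * Polynomial.aeval s (Polynomial.hermite (x - 1)) *
              Polynomial.aeval s (Polynomial.hermite y)
            - (y : ℝ) * Polynomial.aeval s (Polynomial.hermite x) *
                Polynomial.aeval s (Polynomial.hermite (y - 1)))) / ((x : ℝ) - (y : ℝ)) := by
    rw [eq_div_iff hne, mul_comm]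
    exact h1
  rw [discreteHermiteKernel, hInt]
  ring

end
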